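/- Let α₂ ∈ (0, 3/20] and α₁ = 1 − 2α₂ (so α₁, α₂ > 0 and α₁ + 2α₂ = 1), and let η be the probability measure on ((√2−1)², (√2+1)²) with density √(((√2+1)² − x)(x − (√2−1)²))/(2πx) · (α₁ + α₂/x²). Define m_k = ∫ x^k dη(x) and the free cumulants κ₂' = m₂ − m₁², κ₃' = m₃ − 3m₁m₂ + 2m₁³, κ₄' = m₄ − 4m₁m₃ − 2m₂² + 10m₁²m₂ − 5m₁⁴. Then the Hankel determinant κ₂'κ₄' − (κ₃')² is strictly negative; in particular there exist (α₁, α₂) ∈ (0,∞)² with α₁ + 2α₂ = 1 for which η_{α₁,α₂} is not freely infinitely divisible. -/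

import Mathlib

open MeasureTheory Set Real

/-- The probability measure `η_{α₁,α₂}` on `((√2-1)², (√2+1)²)` with density
`√(((√2+1)² - x)(x - (√2-1)²))/(2πx) · (α₁ + α₂/x²)`, where `α₁ = 1 - 2α₂`. -/
noncomputable def etaMeasure (α₂ : ℝ) : Measure ℝ :=
  MeasureTheory.volume.withDensity
    (fun x => ENNReal.ofReal
      ((Set.Ioo ((Real.sqrt 2 - 1) ^ 2) ((Real.sqrt 2 + 1) ^ 2)).indicator
        (fun x =>
          Real.sqrt (((Real.sqrt 2 + 1) ^ 2 - x) * (x - (Real.sqrt 2 - 1) ^ 2)) /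
              (2 * Real.pi * x) * ((1 - 2 * α₂) + α₂ / x ^ 2)) x))

noncomputable def aa : ℝ := 3 - 2*Real.sqrt 2
noncomputable def bb : ℝ := 3 + 2*Real.sqrt 2
lemma sqrt2_sq : Real.sqrt 2 ^ 2 = 2 := Real.sq_sqrt (by norm_num)
lemma sqrt2_lt : Real.sqrt 2 < 1.5 := by nlinarith [sqrt2_sq, Real.sqrt_nonneg 2]
lemma sqrt2_gt : 1.4 < Real.sqrt 2 := by nlinarith [sqrt2_sq, Real.sqrt_nonneg 2]
lemma aa_pos : 0 < aa := by unfold aa; nlinarith [sqrt2_lt]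
lemma aa_lt_bb : aa < bb := by unfold aa bb; nlinarith [sqrt2_gt]
lemma aa_eq : (Real.sqrt 2 - 1)^2 = aa := by unfold aa; nlinarith [sqrt2_sq]
lemma bb_eq : (Real.sqrt 2 + 1)^2 = bb := by unfold bb; nlinarith [sqrt2_sq]
lemma p_pos {x : ℝ} (hx : x ∈ Ioo aa bb) : 0 < -x^2 + 6*x - 1 := by
  obtain ⟨h1, h2⟩ := hx; unfold aa bb at *; nlinarith [sqrt2_sq]
lemma p_aa : -aa^2 + 6*aa - 1 = 0 := by unfold aa; nlinarith [sqrt2_sq]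
lemma p_bb : -bb^2 + 6*bb - 1 = 0 := by unfold bb; nlinarith [sqrt2_sq]

noncomputable def sfn (x : ℝ) : ℝ := Real.sqrt (-x^2 + 6*x - 1)
noncomputable def A1 (x : ℝ) : ℝ := Real.arcsin ((x - 3)/(2*Real.sqrt 2))
noncomputable def A2 (x : ℝ) : ℝ := Real.arcsin ((3*x - 1)/(2*Real.sqrt 2*x))

lemma s_pos {x : ℝ} (hx : x ∈ Ioo aa bb) : 0 < sfn x := Real.sqrt_pos.2 (p_pos hx)
lemma x_pos {x : ℝ} (hx : x ∈ Ioo aa bb) : 0 < x := lt_trans aa_pos hx.1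
lemma s_sq {x : ℝ} (hx : x ∈ Ioo aa bb) : sfn x ^ 2 = -x^2 + 6*x - 1 :=
  Real.sq_sqrt (le_of_lt (p_pos hx))
lemma sqrt2_pos : 0 < Real.sqrt 2 := by nlinarith [sqrt2_gt]

lemma poly_deriv (x : ℝ) : HasDerivAt (fun x : ℝ => -x^2 + 6*x - 1) (-2*x + 6) x := by
  have h : HasDerivAt (fun x : ℝ => -x^2 + 6*x - 1) (-((2:ℕ)*x^(2-1)) + 6*1) x :=
    ((hasDerivAt_pow 2 x).neg.add ((hasDerivAt_id x).const_mul 6)).sub_const 1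
  convert h using 1
  norm_num

lemma hs {x : ℝ} (hx : x ∈ Ioo aa bb) : HasDerivAt sfn ((3-x)/sfn x) x := by
  have := (Real.hasDerivAt_sqrt (ne_of_gt (p_pos hx))).comp x (poly_deriv x)
  have hsp := s_pos hx
  unfold sfn at *
  refine this.congr_deriv (Eq.symm ?_)
  field_simp
  ring

lemma sq8 : (2*Real.sqrt 2)^2 = 8 := by nlinarith [sqrt2_sq]

lemma sqrt8 : Real.sqrt 8 = 2*Real.sqrt 2 := by
  rw [show (8:ℝ) = 2^2*2 by norm_num, Real.sqrt_mul (by positivity), Real.sqrt_sq (by norm_num)]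

lemma one_sub_u1 {x : ℝ} (hx : x ∈ Ioo aa bb) :
    1 - ((x - 3)/(2*Real.sqrt 2))^2 = (-x^2 + 6*x - 1)/8 := by
  have h8 : (2*Real.sqrt 2) ≠ 0 := by positivity
  field_simp
  nlinarith [sqrt2_sq]

lemma sqrt_p_div8 {x : ℝ} (hx : x ∈ Ioo aa bb) :
    Real.sqrt ((-x^2 + 6*x - 1)/8) = sfn x / (2*Real.sqrt 2) := by
  rw [Real.sqrt_div (le_of_lt (p_pos hx)), sqrt8]; rfl

lemma hA1 {x : ℝ} (hx : x ∈ Ioo aa bb) : HasDerivAt A1 (1/sfn x) x := by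
  have hu : HasDerivAt (fun x : ℝ => (x - 3)/(2*Real.sqrt 2)) (1/(2*Real.sqrt 2)) x := by
    have := ((hasDerivAt_id x).sub_const 3).div_const (2*Real.sqrt 2)
    simpa using this
  have hub : ((x - 3)/(2*Real.sqrt 2))^2 < 1 := by
    have := p_pos hx
    have h1 := one_sub_u1 hx
    nlinarith
  have hne1 : (x - 3)/(2*Real.sqrt 2) ≠ -1 := by intro h; rw [h] at hub; norm_num at hub
  have hne2 : (x - 3)/(2*Real.sqrt 2) ≠ 1 := by intro h; rw [h] at hub; norm_num at hub
  have hd := (Real.hasDerivAt_arcsin hne1 hne2).comp x hu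
  have hsq : Real.sqrt (1 - ((x - 3)/(2*Real.sqrt 2))^2) = sfn x / (2*Real.sqrt 2) := by
    rw [one_sub_u1 hx, sqrt_p_div8 hx]
  rw [hsq] at hd
  have hsp := s_pos hx
  have h2 := sqrt2_pos
  refine hd.congr_deriv (Eq.symm ?_)
  field_simp

lemma one_sub_u2 {x : ℝ} (hx : x ∈ Ioo aa bb) :
    1 - ((3*x - 1)/(2*Real.sqrt 2*x))^2 = (-x^2 + 6*x - 1)/(8*x^2) := by
  have hxp := x_pos hx
  have h2 := sqrt2_pos
  have h8x : (2*Real.sqrt 2*x)^2 = 8*x^2 := by nlinarith [sqrt2_sq]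
  field_simp
  rw [sqrt2_sq]; ring

lemma hA2 {x : ℝ} (hx : x ∈ Ioo aa bb) : HasDerivAt A2 (1/(x * sfn x)) x := by
  have hxp := x_pos hx
  have h2 := sqrt2_pos
  have hu : HasDerivAt (fun x : ℝ => (3*x - 1)/(2*Real.sqrt 2*x)) (1/(2*Real.sqrt 2*x^2)) x := by
    have hnum : HasDerivAt (fun x : ℝ => 3*x - 1) 3 x := by
      simpa using ((hasDerivAt_id x).const_mul 3).sub_const 1
    have hden : HasDerivAt (fun x : ℝ => 2*Real.sqrt 2*x) (2*Real.sqrt 2) x := by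
      simpa using (hasDerivAt_id x).const_mul (2*Real.sqrt 2)
    have := hnum.div hden (by positivity)
    refine this.congr_deriv (Eq.symm ?_)
    field_simp
    ring
  have hub : ((3*x - 1)/(2*Real.sqrt 2*x))^2 < 1 := by
    have := p_pos hx
    have h1 := one_sub_u2 hx
    have hpos : 0 < (-x^2 + 6*x - 1)/(8*x^2) := div_pos this (by positivity)
    linarith
  have hne1 : (3*x - 1)/(2*Real.sqrt 2*x) ≠ -1 := by intro h; rw [h] at hub; norm_num at hub
  have hne2 : (3*x - 1)/(2*Real.sqrt 2*x) ≠ 1 := by intro h; rw [h] at hub; norm_num at hub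
  have hd := (Real.hasDerivAt_arcsin hne1 hne2).comp x hu
  have hsq : Real.sqrt (1 - ((3*x - 1)/(2*Real.sqrt 2*x))^2) = sfn x / (2*Real.sqrt 2*x) := by
    rw [one_sub_u2 hx, show (8*x^2 : ℝ) = (2*Real.sqrt 2*x)^2 by nlinarith [sqrt2_sq],
      Real.sqrt_div (le_of_lt (p_pos hx)), Real.sqrt_sq (by positivity)]
    rfl
  rw [hsq] at hd
  have hsp := s_pos hx
  refine hd.congr_deriv (Eq.symm ?_)
  field_simp

lemma s_cont : Continuous sfn := by
  unfold sfn; fun_prop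
lemma A1_cont : Continuous A1 := by
  unfold A1
  exact Real.continuous_arcsin.comp (by fun_prop)
lemma s_aa : sfn aa = 0 := by unfold sfn; rw [p_aa, Real.sqrt_zero]
lemma s_bb : sfn bb = 0 := by unfold sfn; rw [p_bb, Real.sqrt_zero]
lemma A1_aa : A1 aa = -(π/2) := by
  unfold A1 aa
  rw [show (3 - 2*Real.sqrt 2 - 3)/(2*Real.sqrt 2) = -1 by
    field_simp; ring]
  exact Real.arcsin_neg_one
lemma A1_bb : A1 bb = π/2 := by
  unfold A1 bb
  rw [show (3 + 2*Real.sqrt 2 - 3)/(2*Real.sqrt 2) = 1 by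
    have := sqrt2_pos; field_simp; ring]
  exact Real.arcsin_one
lemma A2_aa : A2 aa = -(π/2) := by
  unfold A2 aa
  rw [show (3*(3 - 2*Real.sqrt 2) - 1)/(2*Real.sqrt 2*(3 - 2*Real.sqrt 2)) = -1 by
    have h1 : (3:ℝ) - 2*Real.sqrt 2 > 0 := by nlinarith [sqrt2_lt]
    have := sqrt2_pos
    field_simp
    nlinarith [sqrt2_sq]]
  exact Real.arcsin_neg_one
lemma A2_bb : A2 bb = π/2 := by
  unfold A2 bb
  rw [show (3*(3 + 2*Real.sqrt 2) - 1)/(2*Real.sqrt 2*(3 + 2*Real.sqrt 2)) = 1 by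
    have h1 : (3:ℝ) + 2*Real.sqrt 2 > 0 := by nlinarith [sqrt2_gt]
    have := sqrt2_pos
    field_simp
    nlinarith [sqrt2_sq]]
  exact Real.arcsin_one

lemma K0 : ∫ x in aa..bb, sfn x = 4*π := by
  have hab := le_of_lt aa_lt_bb
  have hd : ∀ x ∈ Ioo aa bb, HasDerivAt (fun x => (x/2 - 3/2)*sfn x + 4*A1 x) (sfn x) x := by
    intro x hx
    have h1 : HasDerivAt (fun x : ℝ => x/2 - 3/2) (1/2) x := by
      simpa using ((hasDerivAt_id x).div_const 2).sub_const (3/2 : ℝ)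
    have := (h1.mul (hs hx)).add ((hA1 hx).const_mul 4)
    refine this.congr_deriv (Eq.symm ?_)
    have hsp := s_pos hx
    have hsq := s_sq hx
    field_simp
    nlinarith [hsq]
  have := intervalIntegral.integral_eq_sub_of_hasDerivAt_of_le hab
    ((((continuous_id.div_const 2).sub continuous_const).mul s_cont).add (continuous_const.mul A1_cont) : Continuous fun x => (x/2 - 3/2)*sfn x + 4*A1 x).continuousOn hd
    (s_cont.intervalIntegrable aa bb)
  rw [this]; simp only [Pi.add_apply, Pi.mul_apply, Pi.sub_apply, id]; rw [s_aa, s_bb, A1_aa, A1_bb]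
  ring



lemma quartic_deriv (c4 c3 c2 c1 c0 x : ℝ) :
    HasDerivAt (fun x : ℝ => c4*x^4 + c3*x^3 + c2*x^2 + c1*x + c0)
      (4*c4*x^3 + 3*c3*x^2 + 2*c2*x + c1) x := by
  have h := (((hasDerivAt_pow 4 x).const_mul c4).add
      (((hasDerivAt_pow 3 x).const_mul c3).add
        (((hasDerivAt_pow 2 x).const_mul c2).add
          (((hasDerivAt_id x).const_mul c1))))).add_const c0
  have he : (fun x : ℝ => c4 * x ^ 4 + (c3 * x ^ 3 + (c2 * x ^ 2 + c1 * id x)) + c0)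
      = fun x : ℝ => c4*x^4 + c3*x^3 + c2*x^2 + c1*x + c0 := by
    funext y; simp [id]; ring
  simp only [Pi.add_apply] at h
  rw [he] at h
  refine h.congr_deriv (Eq.symm ?_)
  push_cast
  ring

lemma Kgen (c4 c3 c2 c1 c0 c : ℝ) (g : ℝ → ℝ)
    (hg : Continuous g)
    (hid : ∀ x : ℝ, (4*c4*x^3 + 3*c3*x^2 + 2*c2*x + c1) * (-x^2+6*x-1)
      + (c4*x^4 + c3*x^3 + c2*x^2 + c1*x + c0) * (3-x) + c = g x * (-x^2+6*x-1)) :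
    ∫ x in aa..bb, g x * sfn x = c * π := by
  have hab := le_of_lt aa_lt_bb
  have hd : ∀ x ∈ Ioo aa bb,
      HasDerivAt (fun x => (c4*x^4 + c3*x^3 + c2*x^2 + c1*x + c0) * sfn x + c * A1 x)
        (g x * sfn x) x := by
    intro x hx
    have h := ((quartic_deriv c4 c3 c2 c1 c0 x).mul (hs hx)).add ((hA1 hx).const_mul c)
    refine h.congr_deriv (Eq.symm ?_)
    have hne := ne_of_gt (s_pos hx)
    have hsq := s_sq hx
    have heq : (4*c4*x^3 + 3*c3*x^2 + 2*c2*x + c1) * sfn x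
        + (c4*x^4 + c3*x^3 + c2*x^2 + c1*x + c0) * ((3 - x) / sfn x) + c * (1 / sfn x)
        = ((4*c4*x^3 + 3*c3*x^2 + 2*c2*x + c1) * (sfn x^2)
          + (c4*x^4 + c3*x^3 + c2*x^2 + c1*x + c0) * (3 - x) + c) / sfn x := by
      field_simp
    rw [heq, hsq, hid x, ← hsq, pow_two]
    field_simp
  have hc : Continuous fun x => (c4*x^4 + c3*x^3 + c2*x^2 + c1*x + c0) * sfn x + c * A1 x := by
    apply Continuous.add _ (continuous_const.mul A1_cont)
    exact (by fun_prop : Continuous fun x : ℝ => c4*x^4 + c3*x^3 + c2*x^2 + c1*x + c0).mul s_cont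
  have key := intervalIntegral.integral_eq_sub_of_hasDerivAt_of_le hab hc.continuousOn hd
    ((hg.mul s_cont).intervalIntegrable aa bb)
  rw [key, s_aa, s_bb, A1_aa, A1_bb]
  ring
lemma K0' : ∫ x in aa..bb, sfn x = 4*π := K0
lemma K1 : ∫ x in aa..bb, x * sfn x = 12*π := by
  have := Kgen 0 0 (1/3) (-1/2) (-25/6) 12 (fun x => x) continuous_id (by intro x; ring)
  simpa using this
lemma K2 : ∫ x in aa..bb, x^2 * sfn x = 44*π := by
  have := Kgen 0 (1/4) (-1/4) (-7/4) (-61/4) 44 (fun x => x^2) (by fun_prop) (by intro x; ring)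
  simpa using this
lemma K3 : ∫ x in aa..bb, x^3 * sfn x = 180*π := by
  have := Kgen (1/5) (-3/20) (-59/60) (-143/20) (-3743/60) 180 (fun x => x^3) (by fun_prop)
    (by intro x; ring)
  simpa using this

lemma A2_contOn : ContinuousOn A2 (Icc aa bb) := by
  unfold A2
  apply Real.continuous_arcsin.comp_continuousOn
  apply ContinuousOn.div (by fun_prop) (by fun_prop)
  intro x hx
  have : 0 < x := lt_of_lt_of_le aa_pos hx.1
  positivity

lemma x_ne {x : ℝ} (hx : x ∈ Icc aa bb) : x ≠ 0 :=
  ne_of_gt (lt_of_lt_of_le aa_pos hx.1)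

lemma sdivx_contOn : ContinuousOn (fun x => sfn x / x) (Icc aa bb) :=
  s_cont.continuousOn.div continuousOn_id (fun x hx => x_ne hx)

lemma Km1 : ∫ x in aa..bb, sfn x / x = 2*π := by
  have hab := le_of_lt aa_lt_bb
  have hd : ∀ x ∈ Ioo aa bb,
      HasDerivAt (fun x => sfn x + 3 * A1 x - A2 x) (sfn x / x) x := by
    intro x hx
    have h := ((hs hx).add ((hA1 hx).const_mul 3)).sub (hA2 hx)
    refine h.congr_deriv (Eq.symm ?_)
    have hne := ne_of_gt (s_pos hx)
    have hxne := ne_of_gt (x_pos hx)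
    have hsq := s_sq hx
    field_simp
    linear_combination hsq
  have hc : ContinuousOn (fun x => sfn x + 3 * A1 x - A2 x) (Icc aa bb) :=
    ((s_cont.continuousOn.add (continuous_const.mul A1_cont).continuousOn).sub A2_contOn)
  have hint : IntervalIntegrable (fun x => sfn x / x) volume aa bb := by
    apply ContinuousOn.intervalIntegrable
    rw [uIcc_of_le hab]; exact sdivx_contOn
  have key := intervalIntegral.integral_eq_sub_of_hasDerivAt_of_le hab hc hd hint
  rw [key, s_aa, s_bb, A1_aa, A1_bb, A2_aa, A2_bb]
  ring

lemma Km2 : ∫ x in aa..bb, sfn x / x^2 = 2*π := by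
  have hab := le_of_lt aa_lt_bb
  have hd : ∀ x ∈ Ioo aa bb,
      HasDerivAt (fun x => -(sfn x / x) - A1 x + 3 * A2 x) (sfn x / x^2) x := by
    intro x hx
    have hxne := ne_of_gt (x_pos hx)
    have hdiv : HasDerivAt (fun x => sfn x / x) (((3-x)/sfn x * x - sfn x * 1)/x^2) x :=
      (hs hx).div (hasDerivAt_id x) hxne
    have h := (hdiv.neg.sub (hA1 hx)).add ((hA2 hx).const_mul 3)
    refine h.congr_deriv (Eq.symm ?_)
    have hne := ne_of_gt (s_pos hx)
    have hsq := s_sq hx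
    field_simp
    ring
  have hc : ContinuousOn (fun x => -(sfn x / x) - A1 x + 3 * A2 x) (Icc aa bb) :=
    ((sdivx_contOn.neg.sub A1_cont.continuousOn).add (continuousOn_const.mul A2_contOn))
  have hint : IntervalIntegrable (fun x => sfn x / x^2) volume aa bb := by
    apply ContinuousOn.intervalIntegrable
    rw [uIcc_of_le hab]
    exact s_cont.continuousOn.div (by fun_prop) (fun x hx => pow_ne_zero 2 (x_ne hx))
  have key := intervalIntegral.integral_eq_sub_of_hasDerivAt_of_le hab hc hd hint
  rw [key, s_aa, s_bb, A1_aa, A1_bb, A2_aa, A2_bb]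
  ring

lemma sfn_eq (x : ℝ) :
    Real.sqrt (((Real.sqrt 2 + 1) ^ 2 - x) * (x - (Real.sqrt 2 - 1) ^ 2)) = sfn x := by
  unfold sfn
  congr 1
  linear_combination (2*x - Real.sqrt 2^2) * sqrt2_sq

lemma sfn_eq' (x : ℝ) : Real.sqrt ((bb - x) * (x - aa)) = sfn x := by
  rw [← aa_eq, ← bb_eq]; exact sfn_eq x

lemma eta_int (t : ℝ) (h0 : 0 ≤ t) (ht : 2*t ≤ 1) (k : ℕ) :
    ∫ x : ℝ, x^k ∂(etaMeasure t)
      = ∫ x in Ioo aa bb, (sfn x/(2*π*x) * ((1 - 2*t) + t/x^2)) * x^k := by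
  set D : ℝ → ℝ := fun x => sfn x/(2*π*x) * ((1 - 2*t) + t/x^2) with hD
  have hD_meas : Measurable D := by
    apply Measurable.mul
    · exact s_cont.measurable.div (by fun_prop)
    · fun_prop
  have hrw : etaMeasure t
      = MeasureTheory.volume.withDensity
        (fun x => ((Real.toNNReal ((Ioo aa bb).indicator D x) : NNReal) : ENNReal)) := by
    unfold etaMeasure
    congr 1
    funext x
    simp only [sfn_eq, aa_eq, bb_eq, sfn_eq']
    rfl
  rw [hrw, integral_withDensity_eq_integral_smul
    (Measurable.real_toNNReal (hD_meas.indicator measurableSet_Ioo)) (fun x => x^k)]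
  rw [← MeasureTheory.integral_indicator measurableSet_Ioo]
  congr 1
  funext x
  by_cases hx : x ∈ Ioo aa bb
  · have hxp := x_pos hx
    have hDpos : 0 ≤ D x := by
      simp only [hD]
      have := Real.sqrt_nonneg (-x^2+6*x-1)
      have hpi := Real.pi_pos
      apply mul_nonneg
      · apply div_nonneg (Real.sqrt_nonneg _)
        positivity
      · have : 0 ≤ t/x^2 := by positivity
        linarith
    rw [Set.indicator_of_mem hx, Set.indicator_of_mem hx,
      NNReal.smul_def, Real.coe_toNNReal _ hDpos, smul_eq_mul]
  · rw [Set.indicator_of_notMem hx, Set.indicator_of_notMem hx]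
    simp

lemma ioo_int (f : ℝ → ℝ) : ∫ x in Ioo aa bb, f x = ∫ x in aa..bb, f x := by
  rw [intervalIntegral.integral_of_le (le_of_lt aa_lt_bb), integral_Ioc_eq_integral_Ioo]

lemma intOn {f : ℝ → ℝ} (h : ContinuousOn f (Icc aa bb)) :
    IntegrableOn f (Ioo aa bb) volume :=
  (h.integrableOn_Icc).mono_set Ioo_subset_Icc_self

lemma moment_split (t : ℝ) (f1 f2 : ℝ → ℝ) (k : ℕ)
    (hf1 : ContinuousOn f1 (Icc aa bb)) (hf2 : ContinuousOn f2 (Icc aa bb))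
    (hpt : ∀ x ∈ Ioo aa bb, (sfn x/(2*π*x) * ((1 - 2*t) + t/x^2)) * x^k
      = (1-2*t)/(2*π) * f1 x + t/(2*π) * f2 x) :
    ∫ x in Ioo aa bb, (sfn x/(2*π*x) * ((1 - 2*t) + t/x^2)) * x^k
      = (1-2*t)/(2*π) * (∫ x in aa..bb, f1 x) + t/(2*π) * (∫ x in aa..bb, f2 x) := by
  rw [setIntegral_congr_fun measurableSet_Ioo hpt,
    integral_add ((intOn hf1).const_mul _) ((intOn hf2).const_mul _),
    MeasureTheory.integral_const_mul, MeasureTheory.integral_const_mul, ioo_int, ioo_int]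

lemma moment1 (t : ℝ) (h0 : 0 ≤ t) (ht : 2*t ≤ 1) :
    ∫ x : ℝ, x^1 ∂(etaMeasure t) = 2 - 3*t := by
  rw [eta_int t h0 ht 1,
    moment_split t sfn (fun x => sfn x / x^2) 1 s_cont.continuousOn
      (s_cont.continuousOn.div (by fun_prop) (fun x hx => pow_ne_zero 2 (x_ne hx)))
      (by intro x hx
          have hxp := x_pos hx
          have hpi := Real.pi_ne_zero
          field_simp),
    K0, Km2]
  have hpi := Real.pi_ne_zero
  field_simp
  ring

lemma moment2 (t : ℝ) (h0 : 0 ≤ t) (ht : 2*t ≤ 1) :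
    ∫ x : ℝ, x^2 ∂(etaMeasure t) = 6 - 11*t := by
  rw [eta_int t h0 ht 2,
    moment_split t (fun x => x * sfn x) (fun x => sfn x / x) 2
      (continuous_id.mul s_cont).continuousOn sdivx_contOn
      (by intro x hx
          have hxp := x_pos hx
          have hpi := Real.pi_ne_zero
          field_simp),
    K1, Km1]
  have hpi := Real.pi_ne_zero
  field_simp
  ring

lemma moment3 (t : ℝ) (h0 : 0 ≤ t) (ht : 2*t ≤ 1) :
    ∫ x : ℝ, x^3 ∂(etaMeasure t) = 22 - 42*t := by
  rw [eta_int t h0 ht 3,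
    moment_split t (fun x => x^2 * sfn x) sfn 3
      ((continuous_pow 2).mul s_cont).continuousOn s_cont.continuousOn
      (by intro x hx
          have hxp := x_pos hx
          have hpi := Real.pi_ne_zero
          field_simp),
    K2, K0]
  have hpi := Real.pi_ne_zero
  field_simp
  ring

lemma moment4 (t : ℝ) (h0 : 0 ≤ t) (ht : 2*t ≤ 1) :
    ∫ x : ℝ, x^4 ∂(etaMeasure t) = 90 - 174*t := by
  rw [eta_int t h0 ht 4,
    moment_split t (fun x => x^3 * sfn x) (fun x => x * sfn x) 4
      ((continuous_pow 3).mul s_cont).continuousOn (continuous_id.mul s_cont).continuousOn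
      (by intro x hx
          have hxp := x_pos hx
          have hpi := Real.pi_ne_zero
          field_simp),
    K3, K1]
  have hpi := Real.pi_ne_zero
  field_simp
  ring

/-- For `α₂ ∈ (0, 3/20]` and `α₁ = 1 - 2α₂`, the Hankel determinant `κ₂'κ₄' - (κ₃')²`
of the free cumulants of `η` (computed from the moments via the moment-cumulant
formulas) is strictly negative; in particular such `η_{α₁,α₂}` is not freely
infinitely divisible. -/
theorem eta_hankel_neg (α₂ : ℝ) (h0 : 0 < α₂) (h320 : α₂ ≤ 3 / 20)
    (m₁ m₂ m₃ m₄ κ₂ κ₃ κ₄ : ℝ)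
    (hm₁ : m₁ = ∫ x : ℝ, x ∂(etaMeasure α₂))
    (hm₂ : m₂ = ∫ x : ℝ, x ^ 2 ∂(etaMeasure α₂))
    (hm₃ : m₃ = ∫ x : ℝ, x ^ 3 ∂(etaMeasure α₂))
    (hm₄ : m₄ = ∫ x : ℝ, x ^ 4 ∂(etaMeasure α₂))
    (hκ₂ : κ₂ = m₂ - m₁ ^ 2)
    (hκ₃ : κ₃ = m₃ - 3 * m₁ * m₂ + 2 * m₁ ^ 3)
    (hκ₄ : κ₄ = m₄ - 4 * m₁ * m₃ - 2 * m₂ ^ 2 + 10 * m₁ ^ 2 * m₂ - 5 * m₁ ^ 4) :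
    κ₂ * κ₄ - κ₃ ^ 2 < 0 := by
  have h0' := le_of_lt h0
  have ht : 2*α₂ ≤ 1 := by linarith
  have e1 : m₁ = 2 - 3*α₂ := by
    rw [hm₁, show (fun x : ℝ => x) = fun x : ℝ => x^1 from funext fun x => (pow_one x).symm]
    exact moment1 α₂ h0' ht
  have e2 : m₂ = 6 - 11*α₂ := hm₂ ▸ moment2 α₂ h0' ht
  have e3 : m₃ = 22 - 42*α₂ := hm₃ ▸ moment3 α₂ h0' ht
  have e4 : m₄ = 90 - 174*α₂ := hm₄ ▸ moment4 α₂ h0' ht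
  have key : κ₂ * κ₄ - κ₃ ^ 2
      = -2*α₂ - 12*α₂^2 + 232*α₂^3 - 459*α₂^4 - 243*α₂^5 + 729*α₂^6 := by
    rw [hκ₂, hκ₃, hκ₄, e1, e2, e3, e4]; ring
  rw [key]
  nlinarith [mul_pos h0 h0, mul_pos (mul_pos h0 h0) h0, sq_nonneg α₂, sq_nonneg (α₂ - 3/20),
    mul_nonneg (mul_nonneg h0' h0') (sub_nonneg.2 h320),
    mul_nonneg (mul_nonneg (mul_nonneg h0' h0') h0') (sub_nonneg.2 h320),
    mul_nonneg (mul_nonneg (mul_nonneg (mul_nonneg h0' h0') h0') h0') (sub_nonneg.2 h320),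
    sq_nonneg (α₂^2 - α₂), sq_nonneg (α₂^2 - 3/20*α₂)]
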